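/- (Proposition 4.9, modifications of type 1.) Let f ∈ k[X] with f(0) = 0 and let T ∈ k[X] be an additive polynomial. Then {y ∈ k : T(y) ∈ S(f)} ⊆ S(f ∘ T), where (f ∘ T)(X) = f(T(X)). Moreover, for y, z ∈ k with T(y), T(z) ∈ S(f), the commutation constants agree: ε_{f∘T}(y, z) = ε_f(T(y), T(z)), where for u, v ∈ S(g) the constant ε_g(u,v) is defined as the (constant) polynomial P_u(X) + P_v(X+u) − P_v(X) − P_u(X+v) built from the unique witnesses P_u, P_v of u, v ∈ S(g). -/

import Mathlib

open Polynomial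

/-- `S(f)`: the set of `y ∈ k` such that `f(X+y) - f(X) - f(y) = P(X) - P(X)^p`
for some polynomial `P` with `P(0) = 0`. -/
def Sf (p : ℕ) {k : Type*} [Field k] (f : k[X]) : Set k :=
  {y | ∃ P : k[X], P.coeff 0 = 0 ∧
    f.comp (X + C y) - f - C (f.eval y) = P - P ^ p}

/-- If `E = E ^ p` with `p ≥ 2`, then `E` is constant. -/
lemma const_of_eq_pow {k : Type*} [Field k] {p : ℕ} (hp : p.Prime) {E : k[X]}
    (h : E = E ^ p) : E = C (E.coeff 0) := by
  have hd : E.natDegree = p * E.natDegree := by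
    conv_lhs => rw [h]
    exact natDegree_pow E p
  have h2 : 2 ≤ p := hp.two_le
  have hd0 : E.natDegree = 0 := by nlinarith [E.natDegree.zero_le]
  exact (Polynomial.eq_C_of_natDegree_eq_zero hd0)

/-- Uniqueness of witnesses: if `P - P^p = Q - Q^p` and both have zero constant
coefficient, then `P = Q`. -/
lemma witness_unique {k : Type*} [Field k] {p : ℕ} (hp : p.Prime) [CharP k p]
    {P Q : k[X]} (hP0 : P.coeff 0 = 0) (hQ0 : Q.coeff 0 = 0)
    (h : P - P ^ p = Q - Q ^ p) : P = Q := by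
  haveI : Fact p.Prime := ⟨hp⟩
  set R := P - Q with hR
  have hRp : R = R ^ p := by
    rw [hR, sub_pow_char]
    linear_combination h
  have hconst : R = C (R.coeff 0) := const_of_eq_pow hp hRp
  have h0 : R.coeff 0 = 0 := by simp [hR, coeff_sub, hP0, hQ0]
  have : R = 0 := by rw [hconst, h0, map_zero]
  have := sub_eq_zero.mp (hR ▸ this)
  exact this

theorem Sf_modification_type_one (p : ℕ) (hp : p.Prime)
    (k : Type*) [Field k] [IsAlgClosed k] [CharP k p]
    (f T : k[X]) (hf0 : f.coeff 0 = 0)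
    (hTadd : (T.map C).comp ((C X : Polynomial k[X]) + X) = C T + T.map C) :
    (∀ y : k, T.eval y ∈ Sf p f → y ∈ Sf p (f.comp T)) ∧
    (∀ (y z : k) (Py Pz Qy Qz : k[X]),
      Py.coeff 0 = 0 →
      f.comp (X + C (T.eval y)) - f - C (f.eval (T.eval y)) = Py - Py ^ p →
      Pz.coeff 0 = 0 →
      f.comp (X + C (T.eval z)) - f - C (f.eval (T.eval z)) = Pz - Pz ^ p →
      Qy.coeff 0 = 0 →
      (f.comp T).comp (X + C y) - f.comp T - C ((f.comp T).eval y) = Qy - Qy ^ p →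
      Qz.coeff 0 = 0 →
      (f.comp T).comp (X + C z) - f.comp T - C ((f.comp T).eval z) = Qz - Qz ^ p →
      Qy + Qz.comp (X + C y) - Qz - Qy.comp (X + C z)
        = Py + Pz.comp (X + C (T.eval y)) - Pz - Py.comp (X + C (T.eval z))) := by
  haveI : Fact p.Prime := ⟨hp⟩
  -- T is additive: T(X + y) = T(X) + T(y)
  have key : ∀ y : k, T.comp (X + C y) = T + C (T.eval y) := by
    intro y
    have h := congrArg (Polynomial.eval (C y : k[X])) hTadd
    simp only [eval_comp, eval_add, eval_C, eval_X, eval_map] at h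
    rw [show (eval₂ C (X + C y) T : k[X]) = T.comp (X + C y) from rfl,
        show (eval₂ C (C y) T : k[X]) = T.comp (C y) from rfl, comp_C] at h
    exact h
  have hT0 : T.eval 0 = 0 := by
    have h := key 0
    simp only [map_zero, add_zero, comp_X] at h
    have : (C (T.eval 0) : k[X]) = 0 := by linear_combination -h
    simpa using congrArg (fun q : k[X] => q.coeff 0) this
  have hswap : ∀ (P : k[X]) (y : k),
      (P.comp T).comp (X + C y) = (P.comp (X + C (T.eval y))).comp T := by
    intro P y
    rw [comp_assoc, comp_assoc, key y]
    congr 1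
    simp [add_comp]
  -- transport of witnesses
  have wit : ∀ (y : k) (P : k[X]), P.coeff 0 = 0 →
      f.comp (X + C (T.eval y)) - f - C (f.eval (T.eval y)) = P - P ^ p →
      (P.comp T).coeff 0 = 0 ∧
      (f.comp T).comp (X + C y) - f.comp T - C ((f.comp T).eval y)
        = P.comp T - (P.comp T) ^ p := by
    intro y P hP0 hPw
    constructor
    · rw [coeff_zero_eq_eval_zero, eval_comp, hT0, ← coeff_zero_eq_eval_zero, hP0]
    · have h2 : (f.comp T).eval y = f.eval (T.eval y) := by rw [eval_comp]
      calc (f.comp T).comp (X + C y) - f.comp T - C ((f.comp T).eval y)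
          = (f.comp (X + C (T.eval y)) - f - C (f.eval (T.eval y))).comp T := by
            rw [hswap f y, h2]; simp [sub_comp]
        _ = (P - P ^ p).comp T := by rw [hPw]
        _ = P.comp T - (P.comp T) ^ p := by simp [sub_comp, pow_comp]
  refine ⟨?_, ?_⟩
  · rintro y ⟨P, hP0, hPw⟩
    exact ⟨P.comp T, (wit y P hP0 hPw).1, (wit y P hP0 hPw).2⟩
  · intro y z Py Pz Qy Qz hPy0 hPyw hPz0 hPzw hQy0 hQyw hQz0 hQzw
    obtain ⟨hy0, hyw⟩ := wit y Py hPy0 hPyw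
    obtain ⟨hz0, hzw⟩ := wit z Pz hPz0 hPzw
    have eQy : Qy = Py.comp T := witness_unique hp hQy0 hy0 (hQyw.symm.trans hyw)
    have eQz : Qz = Pz.comp T := witness_unique hp hQz0 hz0 (hQzw.symm.trans hzw)
    set a := T.eval y with ha
    set b := T.eval z with hb
    set E : k[X] := Py + Pz.comp (X + C a) - Pz - Py.comp (X + C b) with hE
    -- E is "fixed by Frobenius", hence constant
    have hcomp1 : (f.comp (X + C b)).comp (X + C a) = f.comp (X + C (a + b)) := by
      rw [comp_assoc]
      congr 1
      simp [add_comp, map_add]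
      ring
    have hcomp2 : (f.comp (X + C a)).comp (X + C b) = f.comp (X + C (a + b)) := by
      rw [comp_assoc]
      congr 1
      simp [add_comp, map_add]
      ring
    have h3 := congrArg (fun q : k[X] => q.comp (X + C a)) hPzw
    have h4 := congrArg (fun q : k[X] => q.comp (X + C b)) hPyw
    simp only [sub_comp, C_comp, pow_comp, hcomp1] at h3
    simp only [sub_comp, C_comp, pow_comp, hcomp2] at h4
    have hzero : E - E ^ p = 0 := by
      have expand : E ^ p
          = Py ^ p + (Pz.comp (X + C a)) ^ p - Pz ^ p - (Py.comp (X + C b)) ^ p := by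
        rw [hE, sub_pow_char, sub_pow_char, add_pow_char]
      rw [hE, expand]
      linear_combination -hPyw - h3 + hPzw + h4
    have hEp : E = E ^ p := by linear_combination hzero
    have hEc : E = C (E.coeff 0) := const_of_eq_pow hp hEp
    rw [eQy, eQz]
    calc Py.comp T + (Pz.comp T).comp (X + C y) - Pz.comp T - (Py.comp T).comp (X + C z)
        = E.comp T := by rw [hswap Pz y, hswap Py z, hE]; simp [add_comp, sub_comp]; rfl
      _ = E := by conv_lhs => rw [hEc, C_comp]
                  exact hEc.symm
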